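/- Let f^1,...,f^m be monomials in S, and let k with 2m−2 ≤ k ≤ binom(m,2). With transpositions ordered as τ_1=(1,2),...,τ_{m−1}=(m−1,m), τ_m=(1,m), τ_{m+1}=(1,3),...,τ_{2m−3}=(1,m−1), then all remaining ones lexicographically, let τ_k = (μ_k, ν_k). Then the monomial ideal I_k = ⟨β_1,...,β_{k−1}⟩ : β_k (i.e., the ideal I with ⟨β_1,...,β_{k−1}⟩ ∩ ⟨β_k⟩ = I·β_k) is generated by the monomials f^{μ,μ_k,ν_k}/f^{μ_k,ν_k} for μ ∈ {1,...,μ_k−1} ∪ {ν_k−1}. -/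
import Mathlib
open MvPolynomial

section helpers
variable {σ K : Type*} [Field K]

lemma fs_le_iff {w u e : σ →₀ ℕ} (hwu : w ≤ u) (hwe : w ≤ e) : u - w ≤ e - w ↔ u ≤ e := by
  rw [Finsupp.le_def] at hwu hwe
  simp only [Finsupp.le_def, Finsupp.tsub_apply]
  constructor <;> intro h i <;>
    (have h1 := h i; have h2 := hwu i; have h3 := hwe i; omega)

lemma fs_sub_sub {w u : σ →₀ ℕ} (e : σ →₀ ℕ) (hwu : w ≤ u) : e - w - (u - w) = e - u := by
  rw [Finsupp.le_def] at hwu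
  ext i
  simp only [Finsupp.tsub_apply]
  have := hwu i; omega

lemma fs_add_sub {w u e : σ →₀ ℕ} (hwu : w ≤ u) (hue : u ≤ e) : e - u + (u - w) = e - w := by
  rw [Finsupp.le_def] at hwu hue
  ext i
  simp only [Finsupp.add_apply, Finsupp.tsub_apply]
  have := hwu i; have := hue i; omega

lemma coeff_key (φ : MvPolynomial σ K) {u w e : σ →₀ ℕ} (hwu : w ≤ u) (hwe : w ≤ e) :
    coeff (e - w) (φ * monomial (u - w) (1 : K)) = if u ≤ e then coeff (e - u) φ else 0 := by
  rw [coeff_mul_monomial']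
  simp only [fs_sub_sub e hwu, mul_one, fs_le_iff hwu hwe]

end helpers

section bb
variable {K : Type*} [Field K] {d m : ℕ}

noncomputable abbrev bb (a : Fin m → Fin d →₀ ℕ) (μ ν : Fin m) : Fin m → MvPolynomial (Fin d) K :=
  Pi.single ν (monomial (a μ ⊔ a ν - a ν) (1 : K)) -
    Pi.single μ (monomial (a μ ⊔ a ν - a μ) (1 : K))

lemma smul_bb (a : Fin m → Fin d →₀ ℕ) (t : Fin d →₀ ℕ) (μ ν : Fin m) :
    (monomial t (1 : K)) • bb a μ ν =
      (Pi.single ν (monomial (t + (a μ ⊔ a ν - a ν)) (1 : K)) :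
          Fin m → MvPolynomial (Fin d) K) -
        Pi.single μ (monomial (t + (a μ ⊔ a ν - a μ)) (1 : K)) := by
  rw [bb, smul_sub, ← Pi.single_smul, ← Pi.single_smul, smul_eq_mul, smul_eq_mul,
    monomial_mul, monomial_mul, one_mul]

lemma rel1 (a : Fin m → Fin d →₀ ℕ) (r t u : Fin m) :
    (monomial (a r ⊔ a t ⊔ a u - (a t ⊔ a u)) (1 : K)) • bb a t u =
      ((monomial (a r ⊔ a t ⊔ a u - (a r ⊔ a u)) (1 : K)) • bb a r u :
          Fin m → MvPolynomial (Fin d) K) -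
        (monomial (a r ⊔ a t ⊔ a u - (a r ⊔ a t)) (1 : K)) • bb a r t := by
  have h1 : a t ⊔ a u ≤ a r ⊔ a t ⊔ a u := sup_le (le_sup_of_le_left le_sup_right) le_sup_right
  have h2 : a r ⊔ a u ≤ a r ⊔ a t ⊔ a u := sup_le (le_sup_of_le_left le_sup_left) le_sup_right
  have h3 : a r ⊔ a t ≤ a r ⊔ a t ⊔ a u := le_sup_left
  rw [smul_bb, smul_bb, smul_bb,
    fs_add_sub le_sup_right h1, fs_add_sub le_sup_left h1,
    fs_add_sub le_sup_right h2, fs_add_sub le_sup_left h2,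
    fs_add_sub le_sup_right h3, fs_add_sub le_sup_left h3]
  abel

lemma rel2 (a : Fin m → Fin d →₀ ℕ) (r t u : Fin m) :
    (monomial (a r ⊔ a t ⊔ a u - (a t ⊔ a u)) (1 : K)) • bb a t u =
      ((monomial (a r ⊔ a t ⊔ a u - (a r ⊔ a u)) (1 : K)) • bb a r u :
          Fin m → MvPolynomial (Fin d) K) +
        (monomial (a r ⊔ a t ⊔ a u - (a t ⊔ a r)) (1 : K)) • bb a t r := by
  have h1 : a t ⊔ a u ≤ a r ⊔ a t ⊔ a u := sup_le (le_sup_of_le_left le_sup_right) le_sup_right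
  have h2 : a r ⊔ a u ≤ a r ⊔ a t ⊔ a u := sup_le (le_sup_of_le_left le_sup_left) le_sup_right
  have h3 : a t ⊔ a r ≤ a r ⊔ a t ⊔ a u := by
    rw [sup_comm (a t) (a r)]; exact le_sup_left
  rw [smul_bb, smul_bb, smul_bb,
    fs_add_sub le_sup_right h1, fs_add_sub le_sup_left h1,
    fs_add_sub le_sup_right h2, fs_add_sub le_sup_left h2,
    fs_add_sub le_sup_right h3, fs_add_sub le_sup_left h3]
  abel


def Pcond (p q : Fin m) (z : Fin m × Fin m) : Prop :=
  (z.1 : ℕ) + 1 = (z.2 : ℕ) ∨ ((z.1 : ℕ) = 0 ∧ 0 < (z.2 : ℕ)) ∨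
    (1 ≤ (z.1 : ℕ) ∧ (z.1 : ℕ) + 2 ≤ (z.2 : ℕ) ∧
      ((z.1 : ℕ) < (p : ℕ) ∨ (z.1 = p ∧ (z.2 : ℕ) < (q : ℕ))))

open scoped Classical in
noncomputable def wf (a : Fin m → Fin d →₀ ℕ) (p q : Fin m) (z : Fin m × Fin m) :
    Fin m → MvPolynomial (Fin d) K :=
  if Pcond p q z then bb a z.1 z.2 else 0

theorem main_colon (a : Fin m → Fin d →₀ ℕ) (p q : Fin m)
    (hp : 1 ≤ (p : ℕ)) (hpq : (p : ℕ) + 2 ≤ (q : ℕ)) (s : MvPolynomial (Fin d) K) :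
    s • (bb a p q : Fin m → MvPolynomial (Fin d) K) ∈ Submodule.span (MvPolynomial (Fin d) K)
      { b | ∃ μ' ν' : Fin m,
          ((μ' : ℕ) + 1 = (ν' : ℕ)
            ∨ ((μ' : ℕ) = 0 ∧ 0 < (ν' : ℕ))
            ∨ (1 ≤ (μ' : ℕ) ∧ (μ' : ℕ) + 2 ≤ (ν' : ℕ)
                ∧ ((μ' : ℕ) < (p : ℕ) ∨ (μ' = p ∧ (ν' : ℕ) < (q : ℕ)))))
          ∧ b = bb a μ' ν' } ↔
    s ∈ Ideal.span ((fun μ' : Fin m => monomial (a μ' ⊔ a p ⊔ a q - (a p ⊔ a q)) (1 : K)) ''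
      { μ' : Fin m | (μ' : ℕ) < (p : ℕ) ∨ (μ' : ℕ) + 1 = (q : ℕ) }) := by
  classical
  set NN := Submodule.span (MvPolynomial (Fin d) K)
      { b | ∃ μ' ν' : Fin m,
          ((μ' : ℕ) + 1 = (ν' : ℕ)
            ∨ ((μ' : ℕ) = 0 ∧ 0 < (ν' : ℕ))
            ∨ (1 ≤ (μ' : ℕ) ∧ (μ' : ℕ) + 2 ≤ (ν' : ℕ)
                ∧ ((μ' : ℕ) < (p : ℕ) ∨ (μ' = p ∧ (ν' : ℕ) < (q : ℕ)))))
          ∧ b = (bb a μ' ν' : Fin m → MvPolynomial (Fin d) K) } with hNN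
  have hmem : ∀ μ' ν' : Fin m,
      ((μ' : ℕ) + 1 = (ν' : ℕ) ∨ ((μ' : ℕ) = 0 ∧ 0 < (ν' : ℕ)) ∨
        (1 ≤ (μ' : ℕ) ∧ (μ' : ℕ) + 2 ≤ (ν' : ℕ) ∧
          ((μ' : ℕ) < (p : ℕ) ∨ (μ' = p ∧ (ν' : ℕ) < (q : ℕ))))) →
      (bb a μ' ν' : Fin m → MvPolynomial (Fin d) K) ∈ NN :=
    fun μ' ν' h => Submodule.subset_span ⟨μ', ν', h, rfl⟩
  constructor
  · -- forward direction
    intro hsN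
    have hspan2 : NN = Submodule.span (MvPolynomial (Fin d) K)
        (Set.range (wf (K := K) a p q)) := by
      rw [hNN]
      refine Submodule.span_eq_span ?_ ?_
      · rintro b ⟨μ', ν', hcnd, rfl⟩
        refine Submodule.subset_span ⟨(μ', ν'), ?_⟩
        simp only [wf, if_pos (show Pcond p q (μ', ν') from hcnd)]
      · rintro _ ⟨z, rfl⟩
        by_cases h : Pcond p q z
        · refine Submodule.subset_span ⟨z.1, z.2, h, ?_⟩
          simp only [wf, if_pos h]
        · simp only [wf, if_neg h]
          exact zero_mem _
    rw [hspan2, Finsupp.mem_span_range_iff_exists_finsupp] at hsN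
    obtain ⟨c, hc⟩ := hsN
    rw [show ((fun μ' : Fin m => monomial (a μ' ⊔ a p ⊔ a q - (a p ⊔ a q)) (1 : K)) ''
        { μ' : Fin m | (μ' : ℕ) < (p : ℕ) ∨ (μ' : ℕ) + 1 = (q : ℕ) }) =
        (fun e => monomial e (1 : K)) ''
          ((fun μ' : Fin m => a μ' ⊔ a p ⊔ a q - (a p ⊔ a q)) ''
            { μ' : Fin m | (μ' : ℕ) < (p : ℕ) ∨ (μ' : ℕ) + 1 = (q : ℕ) }) from
      (Set.image_image (fun e => monomial e (1 : K))
        (fun μ' : Fin m => a μ' ⊔ a p ⊔ a q - (a p ⊔ a q)) _).symm,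
      mem_ideal_span_monomial_image]
    intro b hb
    set L := a p ⊔ a q with hL
    set cdeg := b + L with hcdeg
    have hLc : L ≤ cdeg := le_add_self
    have hapc : a p ≤ cdeg := le_trans le_sup_left hLc
    have haqc : a q ≤ cdeg := le_trans le_sup_right hLc
    suffices hsuf : ∃ μ' : Fin m,
        ((μ' : ℕ) < (p : ℕ) ∨ (μ' : ℕ) + 1 = (q : ℕ)) ∧ a μ' ≤ cdeg by
      obtain ⟨μ', hμ', hle⟩ := hsuf
      refine ⟨a μ' ⊔ a p ⊔ a q - (a p ⊔ a q), ⟨μ', hμ', rfl⟩, ?_⟩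
      rw [Finsupp.le_def] at hle ⊢
      intro i
      have h1 := hle i
      rw [hcdeg, hL] at h1
      simp only [Finsupp.tsub_apply, Finsupp.sup_apply, Finsupp.add_apply] at h1 ⊢
      omega
    by_contra hno
    push_neg at hno
    set Adj : Fin m → Fin m → Prop := fun v u =>
      (Pcond p q (v, u) ∨ Pcond p q (u, v)) ∧ a v ⊔ a u ≤ cdeg with hAdj
    have hAdjsymm : ∀ v u, Adj v u → Adj u v := by
      intro v u h
      exact ⟨h.1.symm, by rw [sup_comm]; exact h.2⟩
    have hreachc : ∀ u, Relation.ReflTransGen Adj p u → a u ≤ cdeg := by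
      intro u hu
      induction hu with
      | refl => exact hapc
      | tail h1 h2 ih => exact le_trans le_sup_right h2.2
    by_cases hreach : Relation.ReflTransGen Adj p q
    · -- Case A: p and q are connected: extract a good vertex, contradiction with hno
      exfalso
      have hinv : ∀ v : Fin m, Relation.ReflTransGen Adj p v →
          (p : ℕ) ≤ (v : ℕ) ∧ (v : ℕ) + 2 ≤ (q : ℕ) := by
        intro v hv
        induction hv with
        | refl => exact ⟨le_refl _, hpq⟩
        | @tail u w h1 h2 ih =>
          obtain ⟨hor, hsup⟩ := h2
          simp only [Pcond] at hor
          have hwc : a w ≤ cdeg := le_trans le_sup_right hsup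
          have hnlt : ¬ ((w : ℕ) < (p : ℕ) ∨ (w : ℕ) + 1 = (q : ℕ)) :=
            fun h => hno w h hwc
          push_neg at hnlt
          rcases hor with hP | hP
          · rcases hP with h | h | ⟨h1', h2', h3'⟩
            · exact ⟨by omega, by omega⟩
            · omega
            · rcases h3' with h3' | ⟨he, h4⟩
              · omega
              · exact ⟨by omega, by omega⟩
          · rcases hP with h | h | ⟨h1', h2', h3'⟩
            · exact ⟨by omega, by omega⟩
            · omega
            · rcases h3' with h3' | ⟨he, h4⟩
              · omega
              · have he' : (w : ℕ) = (p : ℕ) := congrArg Fin.val he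
                exact ⟨by omega, by omega⟩
      have := hinv q hreach
      omega
    · -- Case B: not connected: show coeff b s = 0, contradiction with b ∈ s.support
      exfalso
      set lam : Fin m × Fin m → K := fun z =>
        if Pcond p q z ∧ a z.1 ⊔ a z.2 ≤ cdeg
        then coeff (cdeg - (a z.1 ⊔ a z.2)) (c z) else 0 with hlam
      have hterm : ∀ v : Fin m, a v ≤ cdeg → ∀ z : Fin m × Fin m,
          coeff (cdeg - a v) ((c z • wf (K := K) a p q z) v) =
            (if v = z.2 then (1 : K) else 0) * lam z -
              (if v = z.1 then (1 : K) else 0) * lam z := by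
        intro v hv z
        by_cases hPz : Pcond p q z
        · simp only [wf, if_pos hPz]
          rw [Pi.smul_apply, smul_eq_mul]
          have hbv : (bb a z.1 z.2 : Fin m → MvPolynomial (Fin d) K) v =
              (if v = z.2 then monomial (a z.1 ⊔ a z.2 - a z.2) (1 : K) else 0) -
                (if v = z.1 then monomial (a z.1 ⊔ a z.2 - a z.1) (1 : K) else 0) := by
            simp [bb, Pi.single_apply]
          have piece : ∀ (j : Fin m), a j ≤ a z.1 ⊔ a z.2 →
              coeff (cdeg - a v)
                (c z * if v = j then monomial (a z.1 ⊔ a z.2 - a j) (1 : K) else 0) =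
                (if v = j then (1 : K) else 0) * lam z := by
            intro j hj
            by_cases hvj : v = j
            · subst hvj
              rw [if_pos rfl, if_pos rfl, one_mul, coeff_key (c z) hj hv]
              simp only [hlam]
              by_cases hcle : a z.1 ⊔ a z.2 ≤ cdeg
              · rw [if_pos hcle, if_pos ⟨hPz, hcle⟩]
              · rw [if_neg hcle, if_neg (by tauto)]
            · rw [if_neg hvj, if_neg hvj, zero_mul, mul_zero, coeff_zero]
          rw [hbv, mul_sub, coeff_sub, piece z.2 le_sup_right, piece z.1 le_sup_left]
        · simp [wf, hPz, hlam]
      have hbal : ∀ v : Fin m, a v ≤ cdeg →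
          (∑ z ∈ c.support, ((if v = z.2 then (1 : K) else 0) * lam z -
              (if v = z.1 then (1 : K) else 0) * lam z)) =
            (if v = q then (1 : K) else 0) * coeff b s -
              (if v = p then (1 : K) else 0) * coeff b s := by
        intro v hv
        have h1 := congrArg (coeff (cdeg - a v)) (congrFun hc v)
        have h0 : ((c.sum fun z r => r • wf (K := K) a p q z) v) =
            ∑ z ∈ c.support, (c z • wf (K := K) a p q z) v := by
          rw [Finsupp.sum]
          exact Finset.sum_apply _ _ _
        rw [h0, coeff_sum, Finset.sum_congr rfl (fun z _ => hterm v hv z)] at h1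
        have h2 : coeff (cdeg - a v) ((s • (bb a p q : Fin m → MvPolynomial (Fin d) K)) v) =
            (if v = q then (1 : K) else 0) * coeff b s -
              (if v = p then (1 : K) else 0) * coeff b s := by
          rw [Pi.smul_apply, smul_eq_mul]
          have hbv : (bb a p q : Fin m → MvPolynomial (Fin d) K) v =
              (if v = q then monomial (a p ⊔ a q - a q) (1 : K) else 0) -
                (if v = p then monomial (a p ⊔ a q - a p) (1 : K) else 0) := by
            simp [bb, Pi.single_apply]
          have piece : ∀ (j : Fin m), a j ≤ a p ⊔ a q →
              coeff (cdeg - a v)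
                (s * if v = j then monomial (a p ⊔ a q - a j) (1 : K) else 0) =
                (if v = j then (1 : K) else 0) * coeff b s := by
            intro j hj
            by_cases hvj : v = j
            · subst hvj
              rw [if_pos rfl, if_pos rfl, one_mul, coeff_key s hj hv]
              rw [if_pos (show a p ⊔ a q ≤ cdeg from hLc),
                show cdeg - (a p ⊔ a q) = b from by rw [hcdeg, hL]; exact add_tsub_cancel_right _ _]
            · rw [if_neg hvj, if_neg hvj, zero_mul, mul_zero, coeff_zero]
          rw [hbv, mul_sub, coeff_sub, piece q le_sup_right, piece p le_sup_left]
        rw [h2] at h1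
        exact h1
      set V : Finset (Fin m) := Finset.univ.filter
        (fun v => Relation.ReflTransGen Adj p v) with hV
      have hpV : p ∈ V := by
        rw [hV, Finset.mem_filter]
        exact ⟨Finset.mem_univ _, Relation.ReflTransGen.refl⟩
      have hqV : q ∉ V := by
        rw [hV, Finset.mem_filter]
        exact fun h => hreach h.2
      have hsum : ∑ v ∈ V, (∑ z ∈ c.support,
          ((if v = z.2 then (1 : K) else 0) * lam z -
            (if v = z.1 then (1 : K) else 0) * lam z)) =
          ∑ v ∈ V, ((if v = q then (1 : K) else 0) * coeff b s -
            (if v = p then (1 : K) else 0) * coeff b s) :=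
        Finset.sum_congr rfl (fun v hv => hbal v
          (hreachc v ((Finset.mem_filter.1 (hV ▸ hv)).2)))
      rw [Finset.sum_comm] at hsum
      have hzero : ∀ z ∈ c.support, (∑ v ∈ V,
          ((if v = z.2 then (1 : K) else 0) * lam z -
            (if v = z.1 then (1 : K) else 0) * lam z)) = 0 := by
        intro z _
        rw [Finset.sum_sub_distrib]
        simp only [ite_mul, one_mul, zero_mul]
        rw [Finset.sum_ite_eq' V z.2 (fun _ => lam z),
          Finset.sum_ite_eq' V z.1 (fun _ => lam z)]
        by_cases hlz : lam z = 0
        · simp [hlz]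
        · have hPz : Pcond p q z ∧ a z.1 ⊔ a z.2 ≤ cdeg := by
            by_contra hcon
            exact hlz (by simp only [hlam]; rw [if_neg hcon])
          have hadj : Adj z.1 z.2 := ⟨Or.inl hPz.1, hPz.2⟩
          have hiff : z.1 ∈ V ↔ z.2 ∈ V := by
            rw [hV, Finset.mem_filter, Finset.mem_filter]
            constructor
            · exact fun h => ⟨Finset.mem_univ _, h.2.tail hadj⟩
            · exact fun h => ⟨Finset.mem_univ _, h.2.tail (hAdjsymm _ _ hadj)⟩
          by_cases h1 : z.2 ∈ V
          · rw [if_pos h1, if_pos (hiff.2 h1), sub_self]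
          · rw [if_neg h1, if_neg (fun h => h1 (hiff.1 h)), sub_self]
      rw [Finset.sum_congr rfl hzero, Finset.sum_const_zero] at hsum
      rw [Finset.sum_sub_distrib] at hsum
      simp only [ite_mul, one_mul, zero_mul] at hsum
      rw [Finset.sum_ite_eq' V q (fun _ => coeff b s),
        Finset.sum_ite_eq' V p (fun _ => coeff b s),
        if_neg hqV, if_pos hpV, zero_sub] at hsum
      exact (MvPolynomial.mem_support_iff.1 hb) (neg_eq_zero.1 hsum.symm)
  · -- backward direction
    intro hs
    refine Submodule.span_induction
      (p := fun t _ => t • (bb a p q : Fin m → MvPolynomial (Fin d) K) ∈ NN)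
      ?_ ?_ ?_ ?_ hs
    · rintro t ⟨μ', hμ', rfl⟩
      rcases hμ' with h1 | h1
      · rw [rel1 a μ' p q]
        refine sub_mem (Submodule.smul_mem _ _ (hmem μ' q ?_))
          (Submodule.smul_mem _ _ (hmem μ' p ?_))
        · rcases Nat.eq_zero_or_pos (μ' : ℕ) with h0 | h0
          · exact Or.inr (Or.inl ⟨h0, by omega⟩)
          · exact Or.inr (Or.inr ⟨h0, by omega, Or.inl h1⟩)
        · rcases Nat.eq_zero_or_pos (μ' : ℕ) with h0 | h0
          · exact Or.inr (Or.inl ⟨h0, by omega⟩)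
          · rcases eq_or_lt_of_le (show (μ' : ℕ) + 1 ≤ (p : ℕ) by omega) with he | hl
            · exact Or.inl he
            · exact Or.inr (Or.inr ⟨h0, by omega, Or.inl h1⟩)
      · rw [rel2 a μ' p q]
        refine add_mem (Submodule.smul_mem _ _ (hmem μ' q ?_))
          (Submodule.smul_mem _ _ (hmem p μ' ?_))
        · exact Or.inl h1
        · rcases eq_or_lt_of_le (show (p : ℕ) + 1 ≤ (μ' : ℕ) by omega) with he | hl
          · exact Or.inl he
          · exact Or.inr (Or.inr ⟨hp, by omega, Or.inr ⟨rfl, by omega⟩⟩)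
    · show (0 : MvPolynomial (Fin d) K) • (bb a p q : Fin m → MvPolynomial (Fin d) K) ∈ NN
      rw [zero_smul]; exact zero_mem _
    · intro x y _ _ hx hy
      show (x + y) • (bb a p q : Fin m → MvPolynomial (Fin d) K) ∈ NN
      rw [add_smul]; exact add_mem hx hy
    · intro r x _ hx
      show (r • x) • (bb a p q : Fin m → MvPolynomial (Fin d) K) ∈ NN
      rw [smul_eq_mul, mul_smul]; exact Submodule.smul_mem _ _ hx

end bb

theorem stmt9 {K : Type*} [Field K] (d m : ℕ)
    (a : Fin m → (Fin d →₀ ℕ)) (p q : Fin m)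
    (hp : 1 ≤ (p : ℕ)) (hpq : (p : ℕ) + 2 ≤ (q : ℕ)) :
    (letI S := MvPolynomial (Fin d) K
     letI β : Fin m → Fin m → (Fin m → S) := fun μ' ν' =>
       Pi.single ν' (monomial (a μ' ⊔ a ν' - a ν') (1 : K))
         - Pi.single μ' (monomial (a μ' ⊔ a ν' - a μ') (1 : K))
     letI N : Submodule S (Fin m → S) := Submodule.span S
       { b | ∃ μ' ν' : Fin m,
           ((μ' : ℕ) + 1 = (ν' : ℕ)
             ∨ ((μ' : ℕ) = 0 ∧ 0 < (ν' : ℕ))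
             ∨ (1 ≤ (μ' : ℕ) ∧ (μ' : ℕ) + 2 ≤ (ν' : ℕ)
                 ∧ ((μ' : ℕ) < (p : ℕ) ∨ (μ' = p ∧ (ν' : ℕ) < (q : ℕ)))))
           ∧ b = β μ' ν' }
     ∀ s : S, s • β p q ∈ N ↔
       s ∈ Ideal.span ((fun μ' : Fin m => monomial (a μ' ⊔ a p ⊔ a q - (a p ⊔ a q)) (1 : K)) ''
         { μ' : Fin m | (μ' : ℕ) < (p : ℕ) ∨ (μ' : ℕ) + 1 = (q : ℕ) })) := by
  intro s
  exact main_colon a p q hp hpq s
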